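/- For every nonempty word 𝔴 and every p ∈ {1,2,3}, the vector v_p(𝔴) = (b,c) ∈ ℤ^2 is primitive, i.e., gcd(|b|,|c|) = 1. Moreover, if p is the last letter of 𝔴, then v_p(𝔴) is generic, i.e., b ≠ 0, c ≠ 0, and b + c ≠ 0. -/

import Mathlib

open MvPolynomial

noncomputable section

abbrev Vec3 := Fin 3 → ℤ

/-- The symmetric Cartan matrix entries determined by `c12, c13, c23`. -/
def cart (c12 c13 c23 : ℤ) (p q : Fin 3) : ℤ :=
  if p = q then 2
  else if (p = 0 ∧ q = 1) ∨ (p = 1 ∧ q = 0) then -c12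
  else if (p = 0 ∧ q = 2) ∨ (p = 2 ∧ q = 0) then -c13
  else -c23

/-- Off-diagonal positive entries `c_pq`. -/
def cOf (c12 c13 c23 : ℤ) (p q : Fin 3) : ℤ :=
  if (p = 0 ∧ q = 1) ∨ (p = 1 ∧ q = 0) then c12
  else if (p = 0 ∧ q = 2) ∨ (p = 2 ∧ q = 0) then c13
  else c23

/-- standard basis vectors α_p of ℤ^3 -/
def alpha (p : Fin 3) : Vec3 := Pi.single p 1

/-- the symmetric bilinear form with (α_p, α_q) given by the Cartan matrix -/
def bform (c12 c13 c23 : ℤ) (v w : Vec3) : ℤ :=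
  ∑ p, ∑ q, v p * cart c12 c13 c23 p q * w q

/-- simple reflection s_p -/
def srefl (c12 c13 c23 : ℤ) (p : Fin 3) (v : Vec3) : Vec3 :=
  v - (bform c12 c13 c23 v (alpha p)) • alpha p

/-- s_𝔴 for a word 𝔴 = i₁⋯i_k : the composite s_{i₁}∘⋯∘s_{i_k} -/
def sWord (c12 c13 c23 : ℤ) (w : List (Fin 3)) (v : Vec3) : Vec3 :=
  w.foldr (fun p u => srefl c12 c13 c23 p u) v

/-- a word is acyclic if it is a prefix of 123123⋯ (letters 0,1,2 here) or of 321321⋯ -/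
def Acyclic (w : List (Fin 3)) : Prop :=
  (∀ t < w.length, w.getD t 0 = (Fin.ofNat 3 t)) ∨
  (∀ t < w.length, w.getD t 0 = -((Fin.ofNat 3 t) + 1))

/-- the length of the longest acyclic prefix -/
def rho (w : List (Fin 3)) : ℕ :=
  @Nat.findGreatest (fun p => Acyclic (w.take p)) (Classical.decPred _) w.length

/-- initial exchange matrix -/
def B0 (c12 c13 c23 : ℤ) : Matrix (Fin 3) (Fin 3) ℤ :=
  !![0, c12, c13; -c12, 0, c23; -c13, -c23, 0]

/-- matrix mutation μ_k -/
def mutMat (k : Fin 3) (b : Matrix (Fin 3) (Fin 3) ℤ) : Matrix (Fin 3) (Fin 3) ℤ :=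
  Matrix.of fun p q =>
    if p = k ∨ q = k then - b p q
    else b p q + (b p k).sign * max (b p k * b k q) 0

/-- mutated exchange matrix B(𝔴) -/
def BW (c12 c13 c23 : ℤ) (w : List (Fin 3)) : Matrix (Fin 3) (Fin 3) ℤ :=
  w.foldl (fun m k => mutMat k m) (B0 c12 c13 c23)

/-- c_pq(𝔴) = |b_pq(𝔴)| -/
def cW (c12 c13 c23 : ℤ) (w : List (Fin 3)) (p q : Fin 3) : ℤ :=
  |BW c12 c13 c23 w p q|

/-- the ambient field F, the fraction field of ℚ[x₁,x₂,x₃] -/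
abbrev FF := FractionRing (MvPolynomial (Fin 3) ℚ)

/-- the initial cluster variables x_p inside F -/
def xv (p : Fin 3) : FF := algebraMap (MvPolynomial (Fin 3) ℚ) FF (X p)

/-- seed mutation on the cluster -/
def mutClus (k : Fin 3) (b : Matrix (Fin 3) (Fin 3) ℤ) (z : Fin 3 → FF) : Fin 3 → FF :=
  fun p =>
    if p = k then
      ((∏ q, z q ^ (max (b q k) 0).toNat) + (∏ q, z q ^ (max (-(b q k)) 0).toNat)) / z k
    else z p

/-- seed mutation -/
def mutSeed (s : Matrix (Fin 3) (Fin 3) ℤ × (Fin 3 → FF)) (k : Fin 3) :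
    Matrix (Fin 3) (Fin 3) ℤ × (Fin 3 → FF) :=
  (mutMat k s.1, mutClus k s.1 s.2)

/-- the seed Ξ(𝔴) obtained from the initial seed by mutating along 𝔴 -/
def Xi (c12 c13 c23 : ℤ) (w : List (Fin 3)) : Matrix (Fin 3) (Fin 3) ℤ × (Fin 3 → FF) :=
  w.foldl mutSeed (B0 c12 c13 c23, xv)

open Classical in
/-- the order of vanishing of z ∈ F at the prime x_q : the unique m with
    z = x_q^m · f/g, f,g prime to x_q (0 if no such m, e.g. z = 0). -/
def ordAt (q : Fin 3) (z : FF) : ℤ :=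
  if h : ∃ m : ℤ, ∃ f g : MvPolynomial (Fin 3) ℚ, ¬ (X q ∣ f) ∧ ¬ (X q ∣ g) ∧ g ≠ 0 ∧
      z = (xv q) ^ m * (algebraMap (MvPolynomial (Fin 3) ℚ) FF f) /
            (algebraMap (MvPolynomial (Fin 3) ℚ) FF g)
  then h.choose else 0

/-- the denominator vector β_p(𝔴) of the p-th cluster variable of Ξ(𝔴) -/
def betaP (c12 c13 c23 : ℤ) (w : List (Fin 3)) (p : Fin 3) : Vec3 :=
  fun q => - ordAt q ((Xi c12 c13 c23 w).2 p)

abbrev V2 := ℤ × ℤ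

def Vbase (p : Fin 3) : V2 × V2 × V2 :=
  if p = 0 then ((-1,2), (-1,1), (0,1))
  else if p = 1 then ((0,1), (1,1), (1,0))
  else ((1,0), (1,-1), (2,-1))

def Vstep (t : V2 × V2 × V2) (p : Fin 3) : V2 × V2 × V2 :=
  if p = 0 then (t.2.1 + t.2.2, t.2.1, t.2.2)
  else if p = 1 then (t.1, t.1 + t.2.2, t.2.2)
  else (t.1, t.2.1, t.1 + t.2.1)

/-- the triple V(𝔴) = (v₁(𝔴), v₂(𝔴), v₃(𝔴)) -/
def VW : List (Fin 3) → V2 × V2 × V2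
  | [] => ((0,0),(0,0),(0,0))
  | i :: r => r.foldl Vstep (Vbase i)

/-- the component v_p(𝔴) of V(𝔴) -/
def vComp (p : Fin 3) (t : V2 × V2 × V2) : V2 :=
  if p = 0 then t.1 else if p = 1 then t.2.1 else t.2.2

/-- (b,c) is generic: b ≠ 0, c ≠ 0, b + c ≠ 0 -/
def Generic (v : V2) : Prop := v.1 ≠ 0 ∧ v.2 ≠ 0 ∧ v.1 + v.2 ≠ 0

/-- (b,c) is primitive: gcd(|b|,|c|) = 1 -/
def Primitive (v : V2) : Prop := Int.gcd v.1 v.2 = 1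

/-- the crossing times ℓ/|n|, ℓ = 1, …, |n|-1, tagged with a letter -/
def marks (n : ℤ) (letter : Fin 3) : List (ℚ × Fin 3) :=
  ((List.range n.natAbs).drop 1).map (fun ℓ => ((ℓ : ℚ) / (n.natAbs : ℚ), letter))

/-- the crossing word υ(b,c) of the segment from (0,0) to (b,c) : letters recorded at
    the crossings with the lines y ∈ ℤ (letter 1), x+y ∈ ℤ (letter 2), x ∈ ℤ (letter 3),
    listed in increasing order of the time parameter. -/
def upsWord (b c : ℤ) : List (Fin 3) :=
  ((marks c 0 ++ marks (b + c) 1 ++ marks b 2).mergeSort (fun s t => s.1 ≤ t.1)).map Prod.snd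

/-- β(b,c) = s_{j₁}⋯s_{j_h}(α_{j_{h+1}}) where υ(b,c) = j₁⋯j_{2h+1} -/
def betaVec (c12 c13 c23 : ℤ) (v : V2) : Vec3 :=
  sWord c12 c13 c23 ((upsWord v.1 v.2).take ((upsWord v.1 v.2).length / 2))
    (alpha ((upsWord v.1 v.2).getD ((upsWord v.1 v.2).length / 2) 0))

/-- φ(𝔳) = β(v_p(𝔳)) where p is the last letter of 𝔳 -/
def phi (c12 c13 c23 : ℤ) (w : List (Fin 3)) : Vec3 :=
  betaVec c12 c13 c23 (vComp (w.getLastD 0) (VW w))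

/-- ψ(ŵ), where ŵ = 𝔴𝔳 with 𝔴 the longest acyclic prefix of ŵ -/
def psi (c12 c13 c23 : ℤ) (w : List (Fin 3)) : Vec3 :=
  if w.drop (rho w) = [] then
    sWord c12 c13 c23 (w.take (rho w)).dropLast (alpha ((w.take (rho w)).getLastD 0))
  else
    sWord c12 c13 c23 (w.take (rho w)) (phi c12 c13 c23 (w.drop (rho w)))


/-- the word (ab)^n : n copies of the two-letter word ab -/
def rep2 (a b : Fin 3) (n : ℕ) : List (Fin 3) := (List.replicate n [a, b]).flatten

/-- auxiliary: determinant of two vectors in V2 -/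
def dt (u v : V2) : ℤ := u.1 * v.2 - u.2 * v.1

/-- strict membership in the open cone with sign vector s -/
def Str (s : ℤ × ℤ) (v : V2) : Prop := 0 < s.1 * v.1 ∧ 0 < s.2 * v.2 ∧ 0 < v.1 + v.2

/-- weak membership -/
def Wk (s : ℤ × ℤ) (v : V2) : Prop := 0 ≤ s.1 * v.1 ∧ 0 ≤ s.2 * v.2 ∧ 0 ≤ v.1 + v.2

def DOne (x : ℤ) : Prop := x = 1 ∨ x = -1

/-- the inductive invariant: p is the last letter -/
def InvW (p : Fin 3) (t : V2 × V2 × V2) : Prop :=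
  (∃ s : ℤ × ℤ, Str s (vComp p t) ∧ ∀ q, Wk s (vComp q t)) ∧
  DOne (dt t.1 t.2.1) ∧ DOne (dt t.1 t.2.2) ∧ DOne (dt t.2.1 t.2.2)

lemma str_wk {s : ℤ × ℤ} {v : V2} (h : Str s v) : Wk s v :=
  ⟨le_of_lt h.1, le_of_lt h.2.1, le_of_lt h.2.2⟩

lemma str_add {s : ℤ × ℤ} {u v : V2} (h : Str s u) (h' : Wk s v) : Str s (u + v) := by
  obtain ⟨h1, h2, h3⟩ := h
  obtain ⟨h1', h2', h3'⟩ := h'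
  refine ⟨?_, ?_, ?_⟩ <;> simp only [Prod.fst_add, Prod.snd_add, mul_add] <;> linarith

lemma str_add' {s : ℤ × ℤ} {u v : V2} (h : Wk s u) (h' : Str s v) : Str s (u + v) := by
  have := str_add h' h
  rwa [add_comm] at this

lemma done_neg {x : ℤ} (h : DOne x) : DOne (-x) := by
  rcases h with h | h <;> [right; left] <;> omega

lemma inv_base (p : Fin 3) : InvW p (Vbase p) := by
  fin_cases p
  · refine ⟨⟨(-1, 1), ?_, ?_⟩, ?_, ?_, ?_⟩
    · simp [Str, Vbase, vComp]
    · intro q; fin_cases q <;> simp [Wk, Vbase, vComp]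
    all_goals simp [DOne, dt, Vbase]
  · refine ⟨⟨(1, 1), ?_, ?_⟩, ?_, ?_, ?_⟩
    · simp [Str, Vbase, vComp]
    · intro q; fin_cases q <;> simp [Wk, Vbase, vComp]
    all_goals simp [DOne, dt, Vbase]
  · refine ⟨⟨(1, -1), ?_, ?_⟩, ?_, ?_, ?_⟩
    · simp [Str, Vbase, vComp]
    · intro q; fin_cases q <;> simp [Wk, Vbase, vComp]
    all_goals simp [DOne, dt, Vbase]

lemma dt_add_left (u v w : V2) : dt (u + v) w = dt u w + dt v w := by
  simp [dt]; ring

lemma dt_add_right (u v w : V2) : dt u (v + w) = dt u v + dt u w := by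
  simp [dt]; ring

lemma dt_self (u : V2) : dt u u = 0 := by simp [dt]; ring

lemma dt_comm (u v : V2) : dt u v = - dt v u := by simp [dt]; ring

lemma inv_step {p : Fin 3} {t : V2 × V2 × V2} (h : InvW p t) (q : Fin 3) (hq : q ≠ p) :
    InvW q (Vstep t q) := by
  obtain ⟨⟨s, hstr, hwk⟩, d12, d13, d23⟩ := h
  obtain ⟨v1, v2, v3⟩ := t
  fin_cases q
  · -- Vstep _ 0 = (v2 + v3, v2, v3)
    show InvW 0 (Vstep (v1, v2, v3) 0)
    have hV : Vstep (v1, v2, v3) 0 = (v2 + v3, v2, v3) := by simp [Vstep]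
    rw [hV]
    refine ⟨⟨s, ?_, ?_⟩, ?_, ?_, ?_⟩
    · simp only [vComp, if_pos rfl]
      fin_cases p
      · exact absurd rfl hq
      · exact str_add (by simpa [vComp] using hstr) (by simpa [vComp] using hwk 2)
      · exact str_add' (by simpa [vComp] using hwk 1) (by simpa [vComp] using hstr)
    · intro r
      fin_cases r
      · simp only [vComp, if_pos rfl]
        fin_cases p
        · exact absurd rfl hq
        · exact str_wk (str_add (by simpa [vComp] using hstr) (by simpa [vComp] using hwk 2))
        · exact str_wk (str_add' (by simpa [vComp] using hwk 1) (by simpa [vComp] using hstr))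
      · simpa [vComp] using hwk 1
      · simpa [vComp] using hwk 2
    · show DOne (dt (v2 + v3) v2)
      rw [dt_add_left, dt_self, dt_comm v3 v2]
      simpa using done_neg d23
    · show DOne (dt (v2 + v3) v3)
      rw [dt_add_left, dt_self]
      simpa using d23
    · exact d23
  · -- Vstep _ 1 = (v1, v1 + v3, v3)
    show InvW 1 (Vstep (v1, v2, v3) 1)
    have hV : Vstep (v1, v2, v3) 1 = (v1, v1 + v3, v3) := by simp [Vstep]
    rw [hV]
    refine ⟨⟨s, ?_, ?_⟩, ?_, ?_, ?_⟩
    · simp only [vComp]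
      norm_num
      fin_cases p
      · exact str_add (by simpa [vComp] using hstr) (by simpa [vComp] using hwk 2)
      · exact absurd rfl hq
      · exact str_add' (by simpa [vComp] using hwk 0) (by simpa [vComp] using hstr)
    · intro r
      fin_cases r
      · simpa [vComp] using hwk 0
      · simp only [vComp]
        norm_num
        fin_cases p
        · exact str_wk (str_add (by simpa [vComp] using hstr) (by simpa [vComp] using hwk 2))
        · exact absurd rfl hq
        · exact str_wk (str_add' (by simpa [vComp] using hwk 0) (by simpa [vComp] using hstr))
      · simpa [vComp] using hwk 2
    · show DOne (dt v1 (v1 + v3))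
      rw [dt_add_right, dt_self]
      simpa using d13
    · exact d13
    · show DOne (dt (v1 + v3) v3)
      rw [dt_add_left, dt_self]
      simpa using d13
  · -- Vstep _ 2 = (v1, v2, v1 + v2)
    show InvW 2 (Vstep (v1, v2, v3) 2)
    have hV : Vstep (v1, v2, v3) 2 = (v1, v2, v1 + v2) := by simp [Vstep]
    rw [hV]
    refine ⟨⟨s, ?_, ?_⟩, ?_, ?_, ?_⟩
    · simp only [vComp]
      norm_num
      fin_cases p
      · exact str_add (by simpa [vComp] using hstr) (by simpa [vComp] using hwk 1)
      · exact str_add' (by simpa [vComp] using hwk 0) (by simpa [vComp] using hstr)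
      · exact absurd rfl hq
    · intro r
      fin_cases r
      · simpa [vComp] using hwk 0
      · simpa [vComp] using hwk 1
      · simp only [vComp]
        norm_num
        fin_cases p
        · exact str_wk (str_add (by simpa [vComp] using hstr) (by simpa [vComp] using hwk 1))
        · exact str_wk (str_add' (by simpa [vComp] using hwk 0) (by simpa [vComp] using hstr))
        · exact absurd rfl hq
    · exact d12
    · show DOne (dt v1 (v1 + v2))
      rw [dt_add_right, dt_self]
      simpa using d12
    · show DOne (dt v2 (v1 + v2))
      rw [dt_add_right, dt_self, dt_comm v2 v1]
      simpa using done_neg d12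

lemma inv_fold : ∀ (r : List (Fin 3)) (p : Fin 3) (t : V2 × V2 × V2), InvW p t →
    List.Chain' (· ≠ ·) (p :: r) →
    InvW ((p :: r).getLast (by simp)) (r.foldl Vstep t)
  | [], p, t, h, _ => by simpa using h
  | q :: r', p, t, h, hc => by
    replace hc := List.isChain_cons_cons.mp hc
    have h' : InvW q (Vstep t q) := inv_step h q (Ne.symm hc.1)
    have := inv_fold r' q (Vstep t q) h' hc.2
    simpa [List.getLast] using this

lemma prim_of_dt {u v : V2} (h : DOne (dt u v)) : Primitive u ∧ Primitive v := by
  constructor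
  · have hd : (Int.gcd u.1 u.2 : ℤ) ∣ dt u v :=
      dvd_sub ((Int.gcd_dvd_left u.1 u.2).mul_right _) ((Int.gcd_dvd_right u.1 u.2).mul_right _)
    have : (Int.gcd u.1 u.2 : ℤ) ∣ 1 := by
      rcases h with h | h
      · rwa [h] at hd
      · rw [h] at hd; exact (dvd_neg).mp hd
    exact_mod_cast Int.eq_one_of_dvd_one (by positivity) this
  · have hd : (Int.gcd v.1 v.2 : ℤ) ∣ dt u v :=
      dvd_sub ((Int.gcd_dvd_right v.1 v.2).mul_left _) ((Int.gcd_dvd_left v.1 v.2).mul_left _)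
    have : (Int.gcd v.1 v.2 : ℤ) ∣ 1 := by
      rcases h with h | h
      · rwa [h] at hd
      · rw [h] at hd; exact (dvd_neg).mp hd
    exact_mod_cast Int.eq_one_of_dvd_one (by positivity) this

lemma generic_of_str {s : ℤ × ℤ} {v : V2} (h : Str s v) : Generic v := by
  obtain ⟨h1, h2, h3⟩ := h
  refine ⟨?_, ?_, ?_⟩
  · intro h0; rw [h0, mul_zero] at h1; exact lt_irrefl 0 h1
  · intro h0; rw [h0, mul_zero] at h2; exact lt_irrefl 0 h2
  · omega

theorem stmt16 (w : List (Fin 3)) (hw : w.Chain' (· ≠ ·)) (hne : w ≠ []) (p : Fin 3) :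
    Primitive (vComp p (VW w)) ∧ (w.getLast hne = p → Generic (vComp p (VW w))) := by
  obtain ⟨i, r, rfl⟩ : ∃ i r, w = i :: r := by
    cases w with
    | nil => exact absurd rfl hne
    | cons i r => exact ⟨i, r, rfl⟩
  have hVW : VW (i :: r) = r.foldl Vstep (Vbase i) := rfl
  have hinv := inv_fold r i (Vbase i) (inv_base i) hw
  rw [← hVW] at hinv
  obtain ⟨⟨s, hstr, hwk⟩, d12, d13, d23⟩ := hinv
  constructor
  · fin_cases p
    · exact (prim_of_dt d12).1
    · exact (prim_of_dt d12).2
    · exact (prim_of_dt d13).2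
  · intro hlast
    rw [hlast] at hstr
    exact generic_of_str hstr

end
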